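/- Let G be a finite group, n ≥ 1, and r : G →* PSL(n, ℂ) a group homomorphism, where PSL(n, ℂ) = SL(n, ℂ) / Z(SL(n, ℂ)). Then there exist a finite group Ĝ, a surjective homomorphism p : Ĝ →* G whose kernel is contained in the center of Ĝ and is cyclic of order dividing n, and a homomorphism r̃ : Ĝ →* SL(n, ℂ) such that q ∘ r̃ = r ∘ p, where q : SL(n, ℂ) → PSL(n, ℂ) is the quotient map. -/

import Mathlib

open Matrix Subgroup

/-- `PSL(n, ℂ)`, the quotient of `SL(n, ℂ)` by its center. -/
abbrev PSL (n : ℕ) :=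
  Matrix.SpecialLinearGroup (Fin n) ℂ ⧸ Subgroup.center (Matrix.SpecialLinearGroup (Fin n) ℂ)

/-- The quotient map `SL(n, ℂ) → PSL(n, ℂ)`. -/
abbrev slProj (n : ℕ) : Matrix.SpecialLinearGroup (Fin n) ℂ →* PSL n :=
  QuotientGroup.mk' (Subgroup.center (Matrix.SpecialLinearGroup (Fin n) ℂ))

section Aux

variable {G : Type} [Group G] {n : ℕ} (r : G →* PSL n)

/-- The pullback of `r` and the quotient map, as a subgroup of `G × SL(n,ℂ)`. -/
def pullbackSubgroup : Subgroup (G × Matrix.SpecialLinearGroup (Fin n) ℂ) where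
  carrier := {x | r x.1 = slProj n x.2}
  one_mem' := by simp
  mul_mem' := by
    intro a b ha hb
    simp only [Set.mem_setOf_eq, Prod.fst_mul, Prod.snd_mul, _root_.map_mul] at *
    rw [ha, hb]
  inv_mem' := by
    intro a ha
    simp only [Set.mem_setOf_eq, Prod.fst_inv, Prod.snd_inv, _root_.map_inv] at *
    rw [ha]

end Aux

/-- Every projective representation `r : G →* PSL(n, ℂ)` of a finite group `G` is
linearized by some finite central extension `p : Ghat →* G` whose kernel is cyclic
of order dividing `n`. -/
theorem projective_rep_linearizes {G : Type} [Group G] [Finite G] {n : ℕ} (hn : 1 ≤ n)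
    (r : G →* PSL n) :
    ∃ (Ghat : Type) (_ : Group Ghat) (_ : Finite Ghat)
      (p : Ghat →* G) (rtilde : Ghat →* Matrix.SpecialLinearGroup (Fin n) ℂ),
      Function.Surjective p ∧
      p.ker ≤ Subgroup.center Ghat ∧
      IsCyclic p.ker ∧
      Nat.card p.ker ∣ n ∧
      ∀ x : Ghat, slProj n (rtilde x) = r (p x) := by
  haveI : NeZero n := ⟨by omega⟩
  set SL := Matrix.SpecialLinearGroup (Fin n) ℂ
  set H := pullbackSubgroup r with hH
  set p : H →* G := (MonoidHom.fst G SL).comp H.subtype with hp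
  set rtilde : H →* SL := (MonoidHom.snd G SL).comp H.subtype with hrt
  have hmem : ∀ x : G × SL, x ∈ H ↔ r x.1 = slProj n x.2 := fun x => Iff.rfl
  -- surjectivity of p
  have hsurj : Function.Surjective p := by
    intro g
    obtain ⟨M, hM⟩ := QuotientGroup.mk'_surjective
      (Subgroup.center SL) (r g)
    exact ⟨⟨(g, M), (hmem (g, M)).2 hM.symm⟩, rfl⟩
  -- description of ker p
  have hker : ∀ x : H, x ∈ p.ker ↔ (x : G × SL).1 = 1 := by
    intro x; rfl
  have hcent : ∀ x : H, x ∈ p.ker → ((x : G × SL).2 ∈ Subgroup.center SL) := by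
    intro x hx
    have h1 : (x : G × SL).1 = 1 := hx
    have := (hmem _).1 x.2
    rw [h1, _root_.map_one] at this
    have : (x : G × SL).2 ∈ (QuotientGroup.mk' (Subgroup.center SL)).ker := by
      rw [MonoidHom.mem_ker]; exact this.symm
    rwa [QuotientGroup.ker_mk'] at this
  -- ker p ≤ center
  have hle : p.ker ≤ Subgroup.center H := by
    intro x hx
    rw [Subgroup.mem_center_iff]
    intro y
    have h1 : (x : G × SL).1 = 1 := hx
    have h2 := hcent x hx
    apply Subtype.ext
    apply Prod.ext
    · show (y : G × SL).1 * (x : G × SL).1 = (x : G × SL).1 * (y : G × SL).1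
      rw [h1, mul_one, one_mul]
    · show (y : G × SL).2 * (x : G × SL).2 = (x : G × SL).2 * (y : G × SL).2
      exact Subgroup.mem_center_iff.1 h2 (y : G × SL).2
  -- equivalence ker p ≃* center SL
  let e : p.ker ≃* Subgroup.center SL :=
  { toFun := fun x => ⟨(x : G × SL).2, hcent x.1 x.2⟩
    invFun := fun z => ⟨⟨(1, (z : SL)), by
        refine (hmem (1, (z : SL))).2 ?_
        show r 1 = slProj n (z : SL)
        rw [_root_.map_one]
        have : (z : SL) ∈ (QuotientGroup.mk' (Subgroup.center SL)).ker := by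
          rw [QuotientGroup.ker_mk']; exact z.2
        exact (MonoidHom.mem_ker.1 this).symm⟩, (hker _).2 rfl⟩
    left_inv := by
      rintro ⟨x, hx⟩
      have h1 : (x : G × SL).1 = 1 := hx
      apply Subtype.ext; apply Subtype.ext
      exact Prod.ext h1.symm rfl
    right_inv := fun z => rfl
    map_mul' := fun x y => rfl }
  -- finiteness
  have e2 := Matrix.SpecialLinearGroup.center_equiv_rootsOfUnity' (R := ℂ) (⟨0, by omega⟩ : Fin n)
  haveI : Finite p.ker := Finite.of_equiv _ (e.toEquiv.trans e2.toEquiv).symm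
  haveI : Finite (H ⧸ p.ker) :=
    Finite.of_injective (QuotientGroup.kerLift p) (QuotientGroup.kerLift_injective p)
  haveI : Finite H := Finite.of_equiv _ (Subgroup.groupEquivQuotientProdSubgroup (s := p.ker)).symm
  -- cyclic
  have hcyc : IsCyclic p.ker := by
    have : IsCyclic (Subgroup.center SL) :=
      isCyclic_of_surjective e2.symm e2.symm.surjective
    exact isCyclic_of_surjective e.symm e.symm.surjective
  -- card
  have hcard : Nat.card p.ker ∣ n := by
    have h1 : Nat.card p.ker = Nat.card (rootsOfUnity (Fintype.card (Fin n)) ℂ) :=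
      Nat.card_congr (e.toEquiv.trans e2.toEquiv)
    haveI : NeZero n := ⟨by omega⟩
    rw [h1, Fintype.card_fin, Complex.card_rootsOfUnity]
  refine ⟨H, inferInstance, inferInstance, p, rtilde, hsurj, hle, hcyc, hcard, ?_⟩
  intro x
  exact ((hmem (x : G × SL)).1 x.2).symm
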